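/- arXiv:2106.02915 — 3 statements merged into one kernel-verified Lean document; each statement's English description precedes it below -/
import Mathlib

section
/- Let σ_1 = (1, 3, 5, …) and σ_2 = (2, 4, 6, …) enumerate the odd and even elements of {1,…,m−1}, respectively, and let 𝕄_{σ_1} and 𝕄_{σ_2} denote the corresponding products 𝕄_1 𝕄_3 𝕄_5 ⋯ and 𝕄_2 𝕄_4 ⋯ of Fiedler matrices of S. Then the PGF pencil 𝕂_o(λ) := λ 𝕄_{σ_1}^{-1} 𝕄_m − 𝕄_0 𝕄_{σ_2} of G is block tridiagonal. -/
open Matrix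

noncomputable section

/-- The matrix polynomial `P(λ) = A_0 + λ A_1 + ⋯ + λ^m A_m` evaluated at `lam`. -/
def PEval (m n : ℕ) (A : Fin (m + 1) → Matrix (Fin n) (Fin n) ℂ) (lam : ℂ) :
    Matrix (Fin n) (Fin n) ℂ :=
  ∑ j : Fin (m + 1), lam ^ (j : ℕ) • A j

/-- `P` is regular: `det P(λ)` is not identically zero. -/
def Regular (m n : ℕ) (A : Fin (m + 1) → Matrix (Fin n) (Fin n) ℂ) : Prop :=
  ∃ lam : ℂ, (PEval m n A lam).det ≠ 0

open Fin.NatCast in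
/-- The Fiedler matrix `M_i` of `P`, an `nm × nm` matrix indexed blockwise by `Fin m × Fin n`
(block row `0` is the top block row). -/
def FM (m n : ℕ) (A : Fin (m + 1) → Matrix (Fin n) (Fin n) ℂ) (i : ℕ) :
    Matrix (Fin m × Fin n) (Fin m × Fin n) ℂ :=
  Matrix.of fun p q =>
    (if i = 0 then
      if p.1 = q.1 then
        (if (p.1 : ℕ) = m - 1 then -A 0 else (1 : Matrix (Fin n) (Fin n) ℂ)) else 0
    else if i = m then
      if p.1 = q.1 then (if (p.1 : ℕ) = 0 then A (m : Fin (m + 1)) else 1) else 0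
    else
      if (p.1 : ℕ) = m - i - 1 ∧ (q.1 : ℕ) = m - i - 1 then -A (i : Fin (m + 1))
      else if (p.1 : ℕ) = m - i - 1 ∧ (q.1 : ℕ) = m - i then 1
      else if (p.1 : ℕ) = m - i ∧ (q.1 : ℕ) = m - i - 1 then 1
      else if (p.1 : ℕ) = m - i ∧ (q.1 : ℕ) = m - i then 0
      else if p.1 = q.1 then 1 else 0) p.2 q.2

/-- `e_j ⊗ B` (with `j` 1-indexed): the `nm × r` block column matrix with `B` in block row `j`. -/
def eB (m n r : ℕ) (j : ℕ) (B : Matrix (Fin n) (Fin r) ℂ) :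
    Matrix (Fin m × Fin n) (Fin r) ℂ :=
  Matrix.of fun p q => if (p.1 : ℕ) + 1 = j then B p.2 q else 0

/-- `e_j^T ⊗ C` (with `j` 1-indexed): the `r × nm` block row matrix with `C` in block column `j`. -/
def eC (m n r : ℕ) (j : ℕ) (C : Matrix (Fin r) (Fin n) ℂ) :
    Matrix (Fin r) (Fin m × Fin n) ℂ :=
  Matrix.of fun q p => if (p.1 : ℕ) + 1 = j then C q p.2 else 0

/-- `M_σ = M_{σ⁻¹(1)} M_{σ⁻¹(2)} ⋯ M_{σ⁻¹(m)}` (here positions are 0-indexed: `σ i` is the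
0-indexed position of the factor `M_i`). -/
def Mperm (m n : ℕ) (A : Fin (m + 1) → Matrix (Fin n) (Fin n) ℂ) (σ : Equiv.Perm (Fin m)) :
    Matrix (Fin m × Fin n) (Fin m × Fin n) ℂ :=
  (List.ofFn fun j : Fin m => FM m n A ((σ.symm j : Fin m) : ℕ)).prod

/-- The Fiedler pencil `L_σ(λ) = λ M_m − M_σ` of `P` evaluated at `lam`. -/
def LP (m n : ℕ) (A : Fin (m + 1) → Matrix (Fin n) (Fin n) ℂ) (σ : Equiv.Perm (Fin m))
    (lam : ℂ) : Matrix (Fin m × Fin n) (Fin m × Fin n) ℂ :=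
  lam • FM m n A m - Mperm m n A σ

/-- `σ` has a consecution at `d` (i.e. `σ(d) < σ(d+1)`). -/
def ConsAt (m : ℕ) (σ : Equiv.Perm (Fin m)) (d : ℕ) : Prop :=
  ∃ h : d + 1 < m, (σ ⟨d, Nat.lt_of_succ_lt h⟩ : ℕ) < (σ ⟨d + 1, h⟩ : ℕ)

/-- `σ` has an inversion at `d` (i.e. `σ(d) > σ(d+1)`). -/
def InvAt (m : ℕ) (σ : Equiv.Perm (Fin m)) (d : ℕ) : Prop :=
  ∃ h : d + 1 < m, (σ ⟨d + 1, h⟩ : ℕ) < (σ ⟨d, Nat.lt_of_succ_lt h⟩ : ℕ)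

/-- `c1` is the number of initial consecutive consecutions of `σ` (the first entry of CISS(σ)). -/
def IsC1 (m : ℕ) (σ : Equiv.Perm (Fin m)) (c1 : ℕ) : Prop :=
  (∀ d < c1, ConsAt m σ d) ∧ ¬ ConsAt m σ c1

/-- `i1` is the number of consecutive inversions of `σ` at `c1, …, c1 + i1 − 1`
(the second entry of CISS(σ)). -/
def IsI1 (m : ℕ) (σ : Equiv.Perm (Fin m)) (c1 i1 : ℕ) : Prop :=
  (∀ d, c1 ≤ d → d < c1 + i1 → InvAt m σ d) ∧ ¬ InvAt m σ (c1 + i1)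

/-- The system matrix `S(λ) = [[−P(λ), B], [C, D]]` evaluated at `lam`. -/
def SMat (m n r : ℕ) (A : Fin (m + 1) → Matrix (Fin n) (Fin n) ℂ)
    (B : Matrix (Fin n) (Fin r) ℂ) (C : Matrix (Fin r) (Fin n) ℂ) (D : Matrix (Fin r) (Fin r) ℂ)
    (lam : ℂ) : Matrix (Fin n ⊕ Fin r) (Fin n ⊕ Fin r) ℂ :=
  Matrix.fromBlocks (-(PEval m n A lam)) B C D

/-- The Fiedler pencil `𝕊_σ(λ)` of the system matrix, evaluated at `lam`:
`[[−L_σ(λ), e_m ⊗ B], [e_{m−c1}^T ⊗ C, D]]` if `c1 > 0`, and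
`[[−L_σ(λ), e_{m−i1} ⊗ B], [e_m^T ⊗ C, D]]` if `c1 = 0`. -/
def SP (m n r : ℕ) (A : Fin (m + 1) → Matrix (Fin n) (Fin n) ℂ)
    (B : Matrix (Fin n) (Fin r) ℂ) (C : Matrix (Fin r) (Fin n) ℂ) (D : Matrix (Fin r) (Fin r) ℂ)
    (σ : Equiv.Perm (Fin m)) (c1 i1 : ℕ) (lam : ℂ) :
    Matrix ((Fin m × Fin n) ⊕ Fin r) ((Fin m × Fin n) ⊕ Fin r) ℂ :=
  if 0 < c1 then
    Matrix.fromBlocks (-(LP m n A σ lam)) (eB m n r m B) (eC m n r (m - c1) C) D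
  else
    Matrix.fromBlocks (-(LP m n A σ lam)) (eB m n r (m - i1) B) (eC m n r m C) D

/-- The Fiedler matrices `𝕄_i` of the system matrix `S(λ)`. -/
def SFM (m n r : ℕ) (A : Fin (m + 1) → Matrix (Fin n) (Fin n) ℂ)
    (B : Matrix (Fin n) (Fin r) ℂ) (C : Matrix (Fin r) (Fin n) ℂ) (D : Matrix (Fin r) (Fin r) ℂ)
    (i : ℕ) : Matrix ((Fin m × Fin n) ⊕ Fin r) ((Fin m × Fin n) ⊕ Fin r) ℂ :=
  if i = 0 then Matrix.fromBlocks (FM m n A 0) (-(eB m n r m B)) (-(eC m n r m C)) (-D)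
  else if i = m then Matrix.fromBlocks (FM m n A m) 0 0 0
  else Matrix.fromBlocks (FM m n A i) 0 0 1

/-- `w = (w0, w1)` is a proper permutation of `{0, 1, …, m}`. -/
def ProperPerm (m : ℕ) (w0 w1 : List ℕ) : Prop :=
  List.Perm (w0 ++ w1) (List.range (m + 1)) ∧ 0 ∈ w0 ∧ m ∈ w1

/-- `M̂_{w0}`: the product of the Fiedler matrices of `P` in the order listed in `w0`. -/
def hatM0 (m n : ℕ) (A : Fin (m + 1) → Matrix (Fin n) (Fin n) ℂ) (w0 : List ℕ) :
    Matrix (Fin m × Fin n) (Fin m × Fin n) ℂ :=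
  (w0.map (FM m n A)).prod

/-- `M̂_{w1} = M_{i1}⁻¹ ⋯ M_{ip}⁻¹ M_m M_{j1}⁻¹ ⋯ M_{jq}⁻¹` for `w1 = (i1,…,ip,m,j1,…,jq)`. -/
def hatM1 (m n : ℕ) (A : Fin (m + 1) → Matrix (Fin n) (Fin n) ℂ) (w1 : List ℕ) :
    Matrix (Fin m × Fin n) (Fin m × Fin n) ℂ :=
  (w1.map (fun i => if i = m then FM m n A m else (FM m n A i)⁻¹)).prod

/-- The PGF pencil `K_w(λ) = λ M̂_{w1} − M̂_{w0}` of `P`, evaluated at `lam`. -/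
def KP (m n : ℕ) (A : Fin (m + 1) → Matrix (Fin n) (Fin n) ℂ) (w0 w1 : List ℕ) (lam : ℂ) :
    Matrix (Fin m × Fin n) (Fin m × Fin n) ℂ :=
  lam • hatM1 m n A w1 - hatM0 m n A w0

/-- `𝕄̂_{w0}` for the system Fiedler matrices. -/
def hatS0 (m n r : ℕ) (A : Fin (m + 1) → Matrix (Fin n) (Fin n) ℂ)
    (B : Matrix (Fin n) (Fin r) ℂ) (C : Matrix (Fin r) (Fin n) ℂ) (D : Matrix (Fin r) (Fin r) ℂ)
    (w0 : List ℕ) : Matrix ((Fin m × Fin n) ⊕ Fin r) ((Fin m × Fin n) ⊕ Fin r) ℂ :=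
  (w0.map (SFM m n r A B C D)).prod

/-- `𝕄̂_{w1}` for the system Fiedler matrices. -/
def hatS1 (m n r : ℕ) (A : Fin (m + 1) → Matrix (Fin n) (Fin n) ℂ)
    (B : Matrix (Fin n) (Fin r) ℂ) (C : Matrix (Fin r) (Fin n) ℂ) (D : Matrix (Fin r) (Fin r) ℂ)
    (w1 : List ℕ) : Matrix ((Fin m × Fin n) ⊕ Fin r) ((Fin m × Fin n) ⊕ Fin r) ℂ :=
  (w1.map (fun i => if i = m then SFM m n r A B C D m else (SFM m n r A B C D i)⁻¹)).prod

/-- The PGF pencil `𝕂_w(λ) = λ 𝕄̂_{w1} − 𝕄̂_{w0}` of `G`, evaluated at `lam`. -/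
def SKP (m n r : ℕ) (A : Fin (m + 1) → Matrix (Fin n) (Fin n) ℂ)
    (B : Matrix (Fin n) (Fin r) ℂ) (C : Matrix (Fin r) (Fin n) ℂ) (D : Matrix (Fin r) (Fin r) ℂ)
    (w0 w1 : List ℕ) (lam : ℂ) :
    Matrix ((Fin m × Fin n) ⊕ Fin r) ((Fin m × Fin n) ⊕ Fin r) ℂ :=
  lam • hatS1 m n r A B C D w1 - hatS0 m n r A B C D w0

/-- The index tuple `w` has a consecution at `d`. -/
def LCons (w : List ℕ) (d : ℕ) : Prop :=
  d ∈ w ∧ d + 1 ∈ w ∧ w.idxOf d < w.idxOf (d + 1)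

/-- The index tuple `w` has an inversion at `d`. -/
def LInv (w : List ℕ) (d : ℕ) : Prop :=
  d ∈ w ∧ d + 1 ∈ w ∧ w.idxOf (d + 1) < w.idxOf d

/-- `CIP(w) = (c0, i0)`. -/
def IsCIP (w : List ℕ) (c0 i0 : ℕ) : Prop :=
  ((∀ d < c0, LCons w d) ∧ ¬ LCons w c0) ∧ ((∀ d < i0, LInv w d) ∧ ¬ LInv w i0)

/-- Block index of an index of an `(nm+r) × (nm+r)` matrix: the first `m` (diagonal) blocks
have size `n`, the last one size `r`. -/
def sIdx (m n r : ℕ) : (Fin m × Fin n) ⊕ Fin r → ℕ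
  | Sum.inl p => p.1
  | Sum.inr _ => m

/-- An `(nm+r) × (nm+r)` matrix has block bandwidth `k` (e.g. `k = 1`: block tridiagonal,
`k = 2`: block pentadiagonal). -/
def BlockBandS (m n r : ℕ) (k : ℕ)
    (M : Matrix ((Fin m × Fin n) ⊕ Fin r) ((Fin m × Fin n) ⊕ Fin r) ℂ) : Prop :=
  ∀ x y, (sIdx m n r x + k < sIdx m n r y ∨ sIdx m n r y + k < sIdx m n r x) → M x y = 0

/-- An `nm × nm` matrix has block bandwidth `k`. -/
def BlockBandP (m n : ℕ) (k : ℕ) (M : Matrix (Fin m × Fin n) (Fin m × Fin n) ℂ) : Prop :=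
  ∀ x y : Fin m × Fin n, ((x.1 : ℕ) + k < (y.1 : ℕ) ∨ (y.1 : ℕ) + k < (x.1 : ℕ)) → M x y = 0

/-- The degree-`k` Horner shift `P_k(λ) = A_{m−k} + λ A_{m−k+1} + ⋯ + λ^k A_m`. -/
def Horner (m n : ℕ) (A : Fin (m + 1) → Matrix (Fin n) (Fin n) ℂ) (k : Fin (m + 1)) (lam : ℂ) :
    Matrix (Fin n) (Fin n) ℂ :=
  ∑ j : Fin ((k : ℕ) + 1),
    lam ^ (j : ℕ) • A ⟨m - (k : ℕ) + (j : ℕ), by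
      have h1 := j.isLt; have h2 := k.isLt; omega⟩

open Fin.NatCast in
/-- `N_1`: the zero-degree coefficient of the first companion pencil of `P`. -/
def N1 (m n : ℕ) (A : Fin (m + 1) → Matrix (Fin n) (Fin n) ℂ) :
    Matrix (Fin m × Fin n) (Fin m × Fin n) ℂ :=
  Matrix.of fun p q =>
    (if (p.1 : ℕ) = 0 then -A ((m - 1 - (q.1 : ℕ) : ℕ) : Fin (m + 1))
     else if (p.1 : ℕ) = (q.1 : ℕ) + 1 then (1 : Matrix (Fin n) (Fin n) ℂ)
     else 0) p.2 q.2

open Fin.NatCast in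
/-- `N_2`: the zero-degree coefficient of the second companion pencil of `P`. -/
def N2 (m n : ℕ) (A : Fin (m + 1) → Matrix (Fin n) (Fin n) ℂ) :
    Matrix (Fin m × Fin n) (Fin m × Fin n) ℂ :=
  Matrix.of fun p q =>
    (if (q.1 : ℕ) = 0 then -A ((m - 1 - (p.1 : ℕ) : ℕ) : Fin (m + 1))
     else if (q.1 : ℕ) = (p.1 : ℕ) + 1 then (1 : Matrix (Fin n) (Fin n) ℂ)
     else 0) p.2 q.2

/-- The first companion form `C_1(λ) = [[−L_1(λ), e_1 ⊗ B], [e_m^T ⊗ C, D]]` of `S`. -/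
def C1P (m n r : ℕ) (A : Fin (m + 1) → Matrix (Fin n) (Fin n) ℂ)
    (B : Matrix (Fin n) (Fin r) ℂ) (C : Matrix (Fin r) (Fin n) ℂ) (D : Matrix (Fin r) (Fin r) ℂ)
    (lam : ℂ) : Matrix ((Fin m × Fin n) ⊕ Fin r) ((Fin m × Fin n) ⊕ Fin r) ℂ :=
  Matrix.fromBlocks (-(lam • FM m n A m - N1 m n A)) (eB m n r 1 B) (eC m n r m C) D

/-- The second companion form `C_2(λ) = [[−L_2(λ), e_m ⊗ B], [e_1^T ⊗ C, D]]` of `S`. -/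
def C2P (m n r : ℕ) (A : Fin (m + 1) → Matrix (Fin n) (Fin n) ℂ)
    (B : Matrix (Fin n) (Fin r) ℂ) (C : Matrix (Fin r) (Fin n) ℂ) (D : Matrix (Fin r) (Fin r) ℂ)
    (lam : ℂ) : Matrix ((Fin m × Fin n) ⊕ Fin r) ((Fin m × Fin n) ⊕ Fin r) ℂ :=
  Matrix.fromBlocks (-(lam • FM m n A m - N2 m n A)) (eB m n r m B) (eC m n r 1 C) D


section Stmt8Aux

open Fin.NatCast

variable {m n : ℕ}

/-- Block-level version of `FM`. -/
def FMb (m n : ℕ) (A : Fin (m + 1) → Matrix (Fin n) (Fin n) ℂ) (i : ℕ) (b c : Fin m) :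
    Matrix (Fin n) (Fin n) ℂ :=
  if i = 0 then
    if b = c then (if (b : ℕ) = m - 1 then -A 0 else (1 : Matrix (Fin n) (Fin n) ℂ)) else 0
  else if i = m then
    if b = c then (if (b : ℕ) = 0 then A (m : Fin (m + 1)) else 1) else 0
  else
    if (b : ℕ) = m - i - 1 ∧ (c : ℕ) = m - i - 1 then -A (i : Fin (m + 1))
    else if (b : ℕ) = m - i - 1 ∧ (c : ℕ) = m - i then 1
    else if (b : ℕ) = m - i ∧ (c : ℕ) = m - i - 1 then 1
    else if (b : ℕ) = m - i ∧ (c : ℕ) = m - i then 0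
    else if b = c then 1 else 0

lemma FM_eq_blk (A : Fin (m + 1) → Matrix (Fin n) (Fin n) ℂ) (i : ℕ) :
    FM m n A i = Matrix.of fun p q => FMb m n A i p.1 q.1 p.2 q.2 := rfl

/-- Block-level product of disjoint middle Fiedler factors. -/
def GPb (m n : ℕ) (A : Fin (m + 1) → Matrix (Fin n) (Fin n) ℂ) (L : List ℕ) (b c : Fin m) :
    Matrix (Fin n) (Fin n) ℂ :=
  if (b : ℕ) = (c : ℕ) then
    (if m - 1 - (b : ℕ) ∈ L then -A ((m - 1 - (b : ℕ) : ℕ) : Fin (m + 1))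
     else if m - (b : ℕ) ∈ L then 0 else 1)
  else if (c : ℕ) = (b : ℕ) + 1 ∧ m - 1 - (b : ℕ) ∈ L then 1
  else if (b : ℕ) = (c : ℕ) + 1 ∧ m - 1 - (c : ℕ) ∈ L then 1
  else 0

/-- Block-level inverse of `GPb`. -/
def GPib (m n : ℕ) (A : Fin (m + 1) → Matrix (Fin n) (Fin n) ℂ) (L : List ℕ) (b c : Fin m) :
    Matrix (Fin n) (Fin n) ℂ :=
  if (b : ℕ) = (c : ℕ) then
    (if m - 1 - (b : ℕ) ∈ L then 0
     else if m - (b : ℕ) ∈ L then A ((m - (b : ℕ) : ℕ) : Fin (m + 1)) else 1)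
  else if (c : ℕ) = (b : ℕ) + 1 ∧ m - 1 - (b : ℕ) ∈ L then 1
  else if (b : ℕ) = (c : ℕ) + 1 ∧ m - 1 - (c : ℕ) ∈ L then 1
  else 0

def GPM (m n : ℕ) (A : Fin (m + 1) → Matrix (Fin n) (Fin n) ℂ) (L : List ℕ) :
    Matrix (Fin m × Fin n) (Fin m × Fin n) ℂ :=
  Matrix.of fun p q => GPb m n A L p.1 q.1 p.2 q.2

def GPI (m n : ℕ) (A : Fin (m + 1) → Matrix (Fin n) (Fin n) ℂ) (L : List ℕ) :
    Matrix (Fin m × Fin n) (Fin m × Fin n) ℂ :=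
  Matrix.of fun p q => GPib m n A L p.1 q.1 p.2 q.2

lemma of_mul_of (F G : Fin m → Fin m → Matrix (Fin n) (Fin n) ℂ) :
    (Matrix.of fun p q : Fin m × Fin n => F p.1 q.1 p.2 q.2) *
      (Matrix.of fun p q : Fin m × Fin n => G p.1 q.1 p.2 q.2) =
    (Matrix.of fun p q : Fin m × Fin n => (∑ j, F p.1 j * G j q.1) p.2 q.2 :
      Matrix (Fin m × Fin n) (Fin m × Fin n) ℂ) := by
  ext p q
  simp only [Matrix.mul_apply, Matrix.of_apply, Fintype.sum_prod_type, Matrix.sum_apply]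

lemma sum_delta {α : Type*} [AddCommMonoid α] (a : ℕ) (ha : a < m) (X : Fin m → α) :
    (∑ j : Fin m, if (j : ℕ) = a then X j else 0) = X ⟨a, ha⟩ := by
  rw [Finset.sum_eq_single (⟨a, ha⟩ : Fin m)]
  · simp
  · intro b _ hb
    rw [if_neg]
    intro h
    exact hb (Fin.ext h)
  · simp

variable (A : Fin (m + 1) → Matrix (Fin n) (Fin n) ℂ)

/-! ### Row descriptions of `GPb` and `GPib` -/

lemma GPb_row_top (L : List ℕ) (b j : Fin m) (ht : m - 1 - (b : ℕ) ∈ L)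
    (hnb : m - (b : ℕ) ∉ L) :
    GPb m n A L b j =
      if (j : ℕ) = (b : ℕ) then -A ((m - 1 - (b : ℕ) : ℕ) : Fin (m + 1))
      else if (j : ℕ) = (b : ℕ) + 1 then 1 else 0 := by
  unfold GPb
  by_cases h1 : (j : ℕ) = (b : ℕ)
  · rw [if_pos h1.symm, if_pos ht, if_pos h1]
  · rw [if_neg (fun h => h1 h.symm), if_neg h1]
    by_cases h2 : (j : ℕ) = (b : ℕ) + 1
    · rw [if_pos ⟨h2, ht⟩, if_pos h2]
    · rw [if_neg (fun h => h2 h.1), if_neg h2, if_neg]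
      rintro ⟨e, hmem⟩
      apply hnb
      have : m - 1 - (j : ℕ) = m - (b : ℕ) := by omega
      rwa [this] at hmem

lemma GPb_row_bot (L : List ℕ) (b j : Fin m) (hb : m - (b : ℕ) ∈ L) (hb1 : 1 ≤ (b : ℕ))
    (hnt : m - 1 - (b : ℕ) ∉ L) :
    GPb m n A L b j = if (j : ℕ) + 1 = (b : ℕ) then 1 else 0 := by
  unfold GPb
  by_cases h1 : (j : ℕ) + 1 = (b : ℕ)
  · rw [if_neg (by omega), if_neg (fun h => hnt h.2), if_pos ⟨by omega, by
      have : m - 1 - (j : ℕ) = m - (b : ℕ) := by omega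
      rwa [this]⟩, if_pos h1]
  · rw [if_neg h1]
    by_cases h2 : (b : ℕ) = (j : ℕ)
    · rw [if_pos h2, if_neg hnt, if_pos hb]
    · rw [if_neg h2, if_neg (fun h => hnt h.2), if_neg (fun h => h1 (by omega))]

lemma GPb_row_id (L : List ℕ) (b j : Fin m) (hnt : m - 1 - (b : ℕ) ∉ L)
    (hnb : m - (b : ℕ) ∉ L) :
    GPb m n A L b j = if b = j then 1 else 0 := by
  unfold GPb
  by_cases h1 : (b : ℕ) = (j : ℕ)
  · rw [if_pos h1, if_neg hnt, if_neg hnb, if_pos (Fin.ext h1)]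
  · rw [if_neg h1, if_neg (fun h => hnt h.2), if_neg, if_neg (fun h => h1 (congrArg Fin.val h))]
    rintro ⟨e, hmem⟩
    apply hnb
    have : m - 1 - (j : ℕ) = m - (b : ℕ) := by omega
    rwa [this] at hmem

lemma GPib_row_top (L : List ℕ) (b j : Fin m) (ht : m - 1 - (b : ℕ) ∈ L)
    (hnb : m - (b : ℕ) ∉ L) :
    GPib m n A L b j = if (j : ℕ) = (b : ℕ) + 1 then 1 else 0 := by
  unfold GPib
  by_cases h1 : (j : ℕ) = (b : ℕ) + 1
  · rw [if_neg (by omega), if_pos ⟨h1, ht⟩, if_pos h1]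
  · by_cases h2 : (b : ℕ) = (j : ℕ)
    · rw [if_pos h2, if_pos ht, if_neg h1]
    · rw [if_neg h2, if_neg (fun h => h1 h.1), if_neg, if_neg h1]
      rintro ⟨e, hmem⟩
      apply hnb
      have : m - 1 - (j : ℕ) = m - (b : ℕ) := by omega
      rwa [this] at hmem

lemma GPib_row_bot (L : List ℕ) (b j : Fin m) (hb : m - (b : ℕ) ∈ L) (hb1 : 1 ≤ (b : ℕ))
    (hnt : m - 1 - (b : ℕ) ∉ L) :
    GPib m n A L b j =
      if (j : ℕ) = (b : ℕ) then A ((m - (b : ℕ) : ℕ) : Fin (m + 1))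
      else if (j : ℕ) + 1 = (b : ℕ) then 1 else 0 := by
  unfold GPib
  by_cases h1 : (j : ℕ) = (b : ℕ)
  · rw [if_pos h1.symm, if_neg hnt, if_pos hb, if_pos h1]
  · rw [if_neg (fun h => h1 h.symm), if_neg (fun h => hnt h.2), if_neg h1]
    by_cases h2 : (j : ℕ) + 1 = (b : ℕ)
    · rw [if_pos ⟨by omega, by
        have : m - 1 - (j : ℕ) = m - (b : ℕ) := by omega
        rwa [this]⟩, if_pos h2]
    · rw [if_neg (fun h => h2 (by omega)), if_neg h2]

lemma GPib_row_id (L : List ℕ) (b j : Fin m) (hnt : m - 1 - (b : ℕ) ∉ L)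
    (hnb : m - (b : ℕ) ∉ L) :
    GPib m n A L b j = if b = j then 1 else 0 := by
  unfold GPib
  by_cases h1 : (b : ℕ) = (j : ℕ)
  · rw [if_pos h1, if_neg hnt, if_neg hnb, if_pos (Fin.ext h1)]
  · rw [if_neg h1, if_neg (fun h => hnt h.2), if_neg, if_neg (fun h => h1 (congrArg Fin.val h))]
    rintro ⟨e, hmem⟩
    apply hnb
    have : m - 1 - (j : ℕ) = m - (b : ℕ) := by omega
    rwa [this] at hmem

lemma GPb_band (L : List ℕ) (b c : Fin m)
    (h : (b : ℕ) + 1 < (c : ℕ) ∨ (c : ℕ) + 1 < (b : ℕ)) : GPb m n A L b c = 0 := by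
  unfold GPb
  rw [if_neg (by omega), if_neg (by rintro ⟨h1, -⟩; omega), if_neg (by rintro ⟨h1, -⟩; omega)]

lemma GPib_band (L : List ℕ) (b c : Fin m)
    (h : (b : ℕ) + 1 < (c : ℕ) ∨ (c : ℕ) + 1 < (b : ℕ)) : GPib m n A L b c = 0 := by
  unfold GPib
  rw [if_neg (by omega), if_neg (by rintro ⟨h1, -⟩; omega), if_neg (by rintro ⟨h1, -⟩; omega)]

lemma FMb_zero_offdiag (b c : Fin m) (h : b ≠ c) : FMb m n A 0 b c = 0 := by
  unfold FMb
  rw [if_pos rfl, if_neg h]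

lemma FMb_m_offdiag (hm : 2 ≤ m) (b c : Fin m) (h : b ≠ c) : FMb m n A m b c = 0 := by
  unfold FMb
  rw [if_neg (by omega), if_pos rfl, if_neg h]

lemma GPb_cons_ignore (i : ℕ) (L : List ℕ) (b c : Fin m)
    (h1 : m - 1 - (b : ℕ) ≠ i) (h2 : m - (b : ℕ) ≠ i)
    (h3 : (b : ℕ) = (c : ℕ) + 1 → m - 1 - (c : ℕ) ≠ i) :
    GPb m n A (i :: L) b c = GPb m n A L b c := by
  by_cases hb1 : (b : ℕ) = (c : ℕ) + 1
  · have h3' := h3 hb1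
    simp only [GPb, List.mem_cons, h1, h2, h3', false_or]
  · simp only [GPb, List.mem_cons, h1, h2, hb1, false_or, false_and, if_false]

/-! ### The two key block computations -/

lemma FMb_mul_GPb (i : ℕ) (L : List ℕ) (hi1 : 1 ≤ i) (him : i < m)
    (hL : ∀ j ∈ L, 1 ≤ j ∧ j < m) (hd : ∀ j ∈ L, i + 2 ≤ j ∨ j + 2 ≤ i) (b c : Fin m) :
    (∑ j, FMb m n A i b j * GPb m n A L j c) = GPb m n A (i :: L) b c := by
  have hni : i ∉ L := fun h => by rcases hd i h with h' | h' <;> omega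
  have hni1 : i + 1 ∉ L := fun h => by rcases hd _ h with h' | h' <;> omega
  have hni2 : i - 1 ∉ L := fun h => by
    have := hL _ h; rcases hd _ h with h' | h' <;> omega
  have hbm := b.isLt
  have hcm := c.isLt
  have hlt1 : m - i - 1 < m := by omega
  have hlt2 : m - i < m := by omega
  by_cases hb1 : (b : ℕ) = m - i - 1
  · have key : ∀ j : Fin m, FMb m n A i b j * GPb m n A L j c =
        (if (j : ℕ) = m - i - 1 then -A (i : Fin (m + 1)) * GPb m n A L j c else 0)
        + (if (j : ℕ) = m - i then GPb m n A L j c else 0) := by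
      intro j
      unfold FMb
      rw [if_neg (by omega), if_neg (by omega)]
      by_cases hj1 : (j : ℕ) = m - i - 1
      · rw [if_pos ⟨hb1, hj1⟩, if_pos hj1, if_neg (by omega), add_zero]
      · by_cases hj2 : (j : ℕ) = m - i
        · rw [if_neg (fun h => hj1 h.2), if_pos ⟨hb1, hj2⟩, one_mul, if_neg hj1, if_pos hj2,
            zero_add]
        · rw [if_neg (fun h => hj1 h.2), if_neg (fun h => hj2 h.2),
            if_neg (by rintro ⟨h', -⟩; omega), if_neg (by rintro ⟨h', -⟩; omega),
            if_neg (fun h => hj1 (by rw [← h]; exact hb1)), zero_mul, if_neg hj1, if_neg hj2,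
            add_zero]
    rw [Finset.sum_congr rfl fun j _ => key j, Finset.sum_add_distrib,
      sum_delta (m - i - 1) hlt1, sum_delta (m - i) hlt2]
    have r1 : GPb m n A L ⟨m - i - 1, hlt1⟩ c =
        if (⟨m - i - 1, hlt1⟩ : Fin m) = c then 1 else 0 := by
      apply GPb_row_id
      · show m - 1 - (m - i - 1) ∉ L
        have e : m - 1 - (m - i - 1) = i := by omega
        rw [e]; exact hni
      · show m - (m - i - 1) ∉ L
        have e : m - (m - i - 1) = i + 1 := by omega
        rw [e]; exact hni1
    have r2 : GPb m n A L ⟨m - i, hlt2⟩ c =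
        if (⟨m - i, hlt2⟩ : Fin m) = c then 1 else 0 := by
      apply GPb_row_id
      · show m - 1 - (m - i) ∉ L
        have e : m - 1 - (m - i) = i - 1 := by omega
        rw [e]; exact hni2
      · show m - (m - i) ∉ L
        have e : m - (m - i) = i := by omega
        rw [e]; exact hni
    rw [r1, r2]
    have ht' : m - 1 - (b : ℕ) ∈ i :: L := by
      have e : m - 1 - (b : ℕ) = i := by omega
      rw [e]; exact List.mem_cons_self
    have hnb' : m - (b : ℕ) ∉ i :: L := by
      have e : m - (b : ℕ) = i + 1 := by omega
      rw [e]
      intro hmem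
      rcases List.mem_cons.mp hmem with h | h
      · omega
      · exact hni1 h
    rw [GPb_row_top A (i :: L) b c ht' hnb']
    have ecast : ((m - 1 - (b : ℕ) : ℕ) : Fin (m + 1)) = (i : Fin (m + 1)) := by
      congr 1; omega
    rw [ecast]
    by_cases hc1 : (c : ℕ) = m - i - 1
    · rw [if_pos (show (⟨m - i - 1, hlt1⟩ : Fin m) = c from Fin.ext (show m - i - 1 = (c : ℕ) by
          omega)),
        if_neg (show (⟨m - i, hlt2⟩ : Fin m) ≠ c from fun h => by
          have : m - i = (c : ℕ) := congrArg Fin.val h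
          omega),
        mul_one, add_zero, if_pos (show (c : ℕ) = (b : ℕ) by omega)]
    · by_cases hc2 : (c : ℕ) = m - i
      · rw [if_neg (show (⟨m - i - 1, hlt1⟩ : Fin m) ≠ c from fun h => by
            have : m - i - 1 = (c : ℕ) := congrArg Fin.val h
            omega),
          if_pos (show (⟨m - i, hlt2⟩ : Fin m) = c from Fin.ext (show m - i = (c : ℕ) by omega)),
          mul_zero, zero_add, if_neg (by omega), if_pos (by omega)]
      · rw [if_neg (show (⟨m - i - 1, hlt1⟩ : Fin m) ≠ c from fun h => by
            have : m - i - 1 = (c : ℕ) := congrArg Fin.val h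
            omega),
          if_neg (show (⟨m - i, hlt2⟩ : Fin m) ≠ c from fun h => by
            have : m - i = (c : ℕ) := congrArg Fin.val h
            omega),
          mul_zero, add_zero, if_neg (by omega), if_neg (by omega)]
  · by_cases hb2 : (b : ℕ) = m - i
    · have key : ∀ j : Fin m, FMb m n A i b j * GPb m n A L j c =
          if (j : ℕ) = m - i - 1 then GPb m n A L j c else 0 := by
        intro j
        unfold FMb
        rw [if_neg (by omega), if_neg (by omega)]
        by_cases hj1 : (j : ℕ) = m - i - 1
        · rw [if_neg (by rintro ⟨h', -⟩; omega), if_neg (by rintro ⟨h', -⟩; omega),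
            if_pos ⟨hb2, hj1⟩, one_mul, if_pos hj1]
        · by_cases hj2 : (j : ℕ) = m - i
          · rw [if_neg (by rintro ⟨h', -⟩; omega), if_neg (by rintro ⟨h', -⟩; omega),
              if_neg (fun h => hj1 h.2), if_pos ⟨hb2, hj2⟩, zero_mul, if_neg hj1]
          · rw [if_neg (by rintro ⟨h', -⟩; omega), if_neg (by rintro ⟨h', -⟩; omega),
              if_neg (fun h => hj1 h.2), if_neg (fun h => hj2 h.2),
              if_neg (fun h => hj2 (by rw [← h]; exact hb2)), zero_mul, if_neg hj1]
      rw [Finset.sum_congr rfl fun j _ => key j, sum_delta (m - i - 1) hlt1]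
      have r1 : GPb m n A L ⟨m - i - 1, hlt1⟩ c =
          if (⟨m - i - 1, hlt1⟩ : Fin m) = c then 1 else 0 := by
        apply GPb_row_id
        · show m - 1 - (m - i - 1) ∉ L
          have e : m - 1 - (m - i - 1) = i := by omega
          rw [e]; exact hni
        · show m - (m - i - 1) ∉ L
          have e : m - (m - i - 1) = i + 1 := by omega
          rw [e]; exact hni1
      rw [r1]
      have hb' : m - (b : ℕ) ∈ i :: L := by
        have e : m - (b : ℕ) = i := by omega
        rw [e]; exact List.mem_cons_self
      have hnt' : m - 1 - (b : ℕ) ∉ i :: L := by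
        have e : m - 1 - (b : ℕ) = i - 1 := by omega
        rw [e]
        intro hmem
        rcases List.mem_cons.mp hmem with h | h
        · omega
        · exact hni2 h
      rw [GPb_row_bot A (i :: L) b c hb' (by omega) hnt']
      by_cases hc : (c : ℕ) + 1 = (b : ℕ)
      · rw [if_pos (show (⟨m - i - 1, hlt1⟩ : Fin m) = c from Fin.ext
          (show m - i - 1 = (c : ℕ) by omega)), if_pos hc]
      · rw [if_neg (show (⟨m - i - 1, hlt1⟩ : Fin m) ≠ c from fun h => by
          have : m - i - 1 = (c : ℕ) := congrArg Fin.val h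
          omega), if_neg hc]
    · have key : ∀ j : Fin m, FMb m n A i b j * GPb m n A L j c =
          if (j : ℕ) = (b : ℕ) then GPb m n A L j c else 0 := by
        intro j
        unfold FMb
        rw [if_neg (by omega), if_neg (by omega),
          if_neg (by rintro ⟨h', -⟩; omega), if_neg (by rintro ⟨h', -⟩; omega),
          if_neg (by rintro ⟨h', -⟩; omega), if_neg (by rintro ⟨h', -⟩; omega)]
        by_cases hbj : b = j
        · rw [if_pos hbj, one_mul, if_pos (congrArg Fin.val hbj).symm]
        · rw [if_neg hbj, zero_mul, if_neg (fun h => hbj (Fin.ext h.symm))]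
      rw [Finset.sum_congr rfl fun j _ => key j, sum_delta (b : ℕ) b.isLt]
      exact (GPb_cons_ignore A i L b c (by omega) (by omega) (fun h => by omega)).symm

lemma GPb_mul_GPib (L : List ℕ) (hL : ∀ j ∈ L, 1 ≤ j ∧ j < m)
    (hpw : L.Pairwise fun a b => a + 2 ≤ b ∨ b + 2 ≤ a) (b c : Fin m) :
    (∑ j, GPb m n A L b j * GPib m n A L j c) = if b = c then 1 else 0 := by
  have hsym : Symmetric fun a b : ℕ => a + 2 ≤ b ∨ b + 2 ≤ a := fun a b h => Or.symm h
  have hex : ∀ x, x ∈ L → x + 1 ∉ L := by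
    intro x hx hx1
    have : x + 2 ≤ x + 1 ∨ x + 1 + 2 ≤ x := by
      haveI : Std.Symm (fun a b : ℕ => a + 2 ≤ b ∨ b + 2 ≤ a) := ⟨fun a b h => hsym h⟩
      exact hpw.forall hx hx1 (by omega)
    omega
  have hbm := b.isLt
  have hcm := c.isLt
  by_cases ht : m - 1 - (b : ℕ) ∈ L
  · obtain ⟨hi1, him⟩ := hL _ ht
    have hbm1 : (b : ℕ) + 1 < m := by omega
    have hnb : m - (b : ℕ) ∉ L := by
      intro h
      apply hex _ ht
      have e : m - 1 - (b : ℕ) + 1 = m - (b : ℕ) := by omega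
      rwa [e]
    have key : ∀ j : Fin m, GPb m n A L b j * GPib m n A L j c =
        (if (j : ℕ) = (b : ℕ) then
          -A ((m - 1 - (b : ℕ) : ℕ) : Fin (m + 1)) * GPib m n A L j c else 0)
        + (if (j : ℕ) = (b : ℕ) + 1 then GPib m n A L j c else 0) := by
      intro j
      rw [GPb_row_top A L b j ht hnb]
      by_cases hj1 : (j : ℕ) = (b : ℕ)
      · rw [if_pos hj1, if_pos hj1, if_neg (by omega), add_zero]
      · rw [if_neg hj1, if_neg hj1]
        by_cases hj2 : (j : ℕ) = (b : ℕ) + 1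
        · rw [if_pos hj2, if_pos hj2, one_mul, zero_add]
        · rw [if_neg hj2, if_neg hj2, zero_mul, add_zero]
    rw [Finset.sum_congr rfl fun j _ => key j, Finset.sum_add_distrib,
      sum_delta (b : ℕ) b.isLt, sum_delta ((b : ℕ) + 1) hbm1]
    have eb : (⟨(b : ℕ), b.isLt⟩ : Fin m) = b := rfl
    rw [eb, GPib_row_top A L b c ht hnb]
    have hb' : m - ((⟨(b : ℕ) + 1, hbm1⟩ : Fin m) : ℕ) ∈ L := by
      show m - ((b : ℕ) + 1) ∈ L
      have e : m - ((b : ℕ) + 1) = m - 1 - (b : ℕ) := by omega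
      rw [e]; exact ht
    have hnt' : m - 1 - ((⟨(b : ℕ) + 1, hbm1⟩ : Fin m) : ℕ) ∉ L := by
      show m - 1 - ((b : ℕ) + 1) ∉ L
      intro h
      apply hex _ h
      have e : m - 1 - ((b : ℕ) + 1) + 1 = m - 1 - (b : ℕ) := by omega
      rwa [e]
    rw [GPib_row_bot A L ⟨(b : ℕ) + 1, hbm1⟩ c hb' (show 1 ≤ (b : ℕ) + 1 by omega) hnt']
    by_cases hc1 : (c : ℕ) = (b : ℕ)
    · rw [if_neg (by omega),
        if_neg (show ¬(c : ℕ) = ((⟨(b : ℕ) + 1, hbm1⟩ : Fin m) : ℕ) from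
          show ¬(c : ℕ) = (b : ℕ) + 1 by omega),
        if_pos (show (c : ℕ) + 1 = ((⟨(b : ℕ) + 1, hbm1⟩ : Fin m) : ℕ) from
          show (c : ℕ) + 1 = (b : ℕ) + 1 by omega),
        mul_zero, zero_add, if_pos (Fin.ext hc1.symm)]
    · by_cases hc2 : (c : ℕ) = (b : ℕ) + 1
      · rw [if_pos hc2,
          if_pos (show (c : ℕ) = ((⟨(b : ℕ) + 1, hbm1⟩ : Fin m) : ℕ) from
            show (c : ℕ) = (b : ℕ) + 1 from hc2),
          mul_one, if_neg (fun h => hc1 (congrArg Fin.val h).symm)]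
        have e : ((m - ((⟨(b : ℕ) + 1, hbm1⟩ : Fin m) : ℕ) : ℕ) : Fin (m + 1)) =
            ((m - 1 - (b : ℕ) : ℕ) : Fin (m + 1)) := by
          show ((m - ((b : ℕ) + 1) : ℕ) : Fin (m + 1)) = _
          congr 1
          omega
        rw [e, neg_add_cancel]
      · rw [if_neg hc2,
          if_neg (show ¬(c : ℕ) = ((⟨(b : ℕ) + 1, hbm1⟩ : Fin m) : ℕ) from
            show ¬(c : ℕ) = (b : ℕ) + 1 from hc2),
          if_neg (show ¬(c : ℕ) + 1 = ((⟨(b : ℕ) + 1, hbm1⟩ : Fin m) : ℕ) from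
            show ¬(c : ℕ) + 1 = (b : ℕ) + 1 by omega),
          mul_zero, add_zero, if_neg (fun h => hc1 (congrArg Fin.val h).symm)]
  · by_cases hbt : m - (b : ℕ) ∈ L
    · obtain ⟨hi1, him⟩ := hL _ hbt
      have hb1 : 1 ≤ (b : ℕ) := by omega
      have hblt : (b : ℕ) - 1 < m := by omega
      have key : ∀ j : Fin m, GPb m n A L b j * GPib m n A L j c =
          if (j : ℕ) = (b : ℕ) - 1 then GPib m n A L j c else 0 := by
        intro j
        rw [GPb_row_bot A L b j hbt hb1 ht]
        by_cases hj : (j : ℕ) + 1 = (b : ℕ)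
        · rw [if_pos hj, one_mul, if_pos (by omega)]
        · rw [if_neg hj, zero_mul, if_neg (by omega)]
      rw [Finset.sum_congr rfl fun j _ => key j, sum_delta ((b : ℕ) - 1) hblt]
      have ht' : m - 1 - ((⟨(b : ℕ) - 1, hblt⟩ : Fin m) : ℕ) ∈ L := by
        show m - 1 - ((b : ℕ) - 1) ∈ L
        have e : m - 1 - ((b : ℕ) - 1) = m - (b : ℕ) := by omega
        rw [e]; exact hbt
      have hnb' : m - ((⟨(b : ℕ) - 1, hblt⟩ : Fin m) : ℕ) ∉ L := by
        show m - ((b : ℕ) - 1) ∉ L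
        intro h
        have e : m - (b : ℕ) + 1 = m - ((b : ℕ) - 1) := by omega
        rw [← e] at h
        exact hex _ hbt h
      rw [GPib_row_top A L ⟨(b : ℕ) - 1, hblt⟩ c ht' hnb']
      by_cases hc : (c : ℕ) = (b : ℕ)
      · rw [if_pos (show (c : ℕ) = ((⟨(b : ℕ) - 1, hblt⟩ : Fin m) : ℕ) + 1 from
            show (c : ℕ) = (b : ℕ) - 1 + 1 by omega),
          if_pos (Fin.ext hc.symm)]
      · rw [if_neg (show ¬(c : ℕ) = ((⟨(b : ℕ) - 1, hblt⟩ : Fin m) : ℕ) + 1 from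
            show ¬(c : ℕ) = (b : ℕ) - 1 + 1 by omega),
          if_neg (fun h => hc (congrArg Fin.val h).symm)]
    · have key : ∀ j : Fin m, GPb m n A L b j * GPib m n A L j c =
          if (j : ℕ) = (b : ℕ) then GPib m n A L j c else 0 := by
        intro j
        rw [GPb_row_id A L b j ht hbt]
        by_cases hj : b = j
        · rw [if_pos hj, one_mul, if_pos (congrArg Fin.val hj).symm]
        · rw [if_neg hj, zero_mul, if_neg (fun h => hj (Fin.ext h.symm))]
      rw [Finset.sum_congr rfl fun j _ => key j, sum_delta (b : ℕ) b.isLt]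
      exact GPib_row_id A L b c ht hbt

/-! ### Matrix-level assembly -/

lemma blkdiag_one (p q : Fin m × Fin n) :
    (if p.1 = q.1 then (1 : Matrix (Fin n) (Fin n) ℂ) else 0) p.2 q.2 =
      (1 : Matrix (Fin m × Fin n) (Fin m × Fin n) ℂ) p q := by
  by_cases h : p.1 = q.1 <;> by_cases h2 : p.2 = q.2 <;>
    simp [Matrix.one_apply, Prod.ext_iff, h, h2]

lemma GPM_nil : GPM m n A [] = 1 := by
  ext p q
  show GPb m n A [] p.1 q.1 p.2 q.2 = _
  rw [GPb_row_id A [] p.1 q.1 (List.not_mem_nil) (List.not_mem_nil)]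
  exact blkdiag_one p q

lemma GPM_cons (i : ℕ) (L : List ℕ) (hi1 : 1 ≤ i) (him : i < m)
    (hL : ∀ j ∈ L, 1 ≤ j ∧ j < m) (hd : ∀ j ∈ L, i + 2 ≤ j ∨ j + 2 ≤ i) :
    FM m n A i * GPM m n A L = GPM m n A (i :: L) := by
  rw [FM_eq_blk]
  unfold GPM
  rw [of_mul_of]
  ext p q
  show (∑ j, FMb m n A i p.1 j * GPb m n A L j q.1) p.2 q.2 = _
  rw [FMb_mul_GPb A i L hi1 him hL hd p.1 q.1]
  rfl

lemma GPM_eq_prod : ∀ (L : List ℕ), (∀ j ∈ L, 1 ≤ j ∧ j < m) →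
    (L.Pairwise fun a b => a + 2 ≤ b ∨ b + 2 ≤ a) →
    (L.map (FM m n A)).prod = GPM m n A L
  | [], _, _ => by
    rw [List.map_nil, List.prod_nil, GPM_nil]
  | (i :: L), hL, hpw => by
    rw [List.map_cons, List.prod_cons,
      GPM_eq_prod L (fun j hj => hL j (List.mem_cons_of_mem _ hj)) hpw.of_cons]
    exact GPM_cons A i L (hL i (List.mem_cons_self)).1 (hL i (List.mem_cons_self)).2
      (fun j hj => hL j (List.mem_cons_of_mem _ hj)) (List.pairwise_cons.mp hpw).1

lemma GPM_mul_GPI (L : List ℕ) (hL : ∀ j ∈ L, 1 ≤ j ∧ j < m)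
    (hpw : L.Pairwise fun a b => a + 2 ≤ b ∨ b + 2 ≤ a) :
    GPM m n A L * GPI m n A L = 1 := by
  unfold GPM GPI
  rw [of_mul_of]
  ext p q
  show (∑ j, GPb m n A L p.1 j * GPib m n A L j q.1) p.2 q.2 = _
  rw [GPb_mul_GPib A L hL hpw p.1 q.1]
  exact blkdiag_one p q

lemma SFM_mid {r : ℕ} (B : Matrix (Fin n) (Fin r) ℂ) (C : Matrix (Fin r) (Fin n) ℂ)
    (D : Matrix (Fin r) (Fin r) ℂ) (i : ℕ) (h1 : 1 ≤ i) (h2 : i < m) :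
    SFM m n r A B C D i = Matrix.fromBlocks (FM m n A i) 0 0 1 := by
  unfold SFM
  rw [if_neg (by omega), if_neg (by omega)]

lemma prod_SFM {r : ℕ} (B : Matrix (Fin n) (Fin r) ℂ) (C : Matrix (Fin r) (Fin n) ℂ)
    (D : Matrix (Fin r) (Fin r) ℂ) :
    ∀ (L : List ℕ), (∀ j ∈ L, 1 ≤ j ∧ j < m) →
    (L.map (SFM m n r A B C D)).prod = Matrix.fromBlocks ((L.map (FM m n A)).prod) 0 0 1
  | [], _ => by
    rw [List.map_nil, List.prod_nil, List.map_nil, List.prod_nil, Matrix.fromBlocks_one]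
  | (i :: L), hL => by
    rw [List.map_cons, List.prod_cons, List.map_cons, List.prod_cons,
      prod_SFM B C D L (fun j hj => hL j (List.mem_cons_of_mem _ hj)),
      SFM_mid A B C D i (hL i (List.mem_cons_self)).1 (hL i (List.mem_cons_self)).2,
      Matrix.fromBlocks_multiply]
    simp

end Stmt8Aux

/-- with `σ₁ = (1, 3, 5, …)` the odd and `σ₂ = (2, 4, 6, …)` the even elements of
`{1, …, m−1}`, the PGF pencil `𝕂_o(λ) = λ 𝕄_{σ₁}⁻¹ 𝕄_m − 𝕄_0 𝕄_{σ₂}` of `G` is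
block tridiagonal. -/
theorem stmt8 (m n r : ℕ) (hm : 2 ≤ m) (hn : 1 ≤ n) (hr : 1 ≤ r)
    (A : Fin (m + 1) → Matrix (Fin n) (Fin n) ℂ) (hreg : Regular m n A)
    (B : Matrix (Fin n) (Fin r) ℂ) (C : Matrix (Fin r) (Fin n) ℂ)
    (D : Matrix (Fin r) (Fin r) ℂ) :
    ∀ lam : ℂ,
      BlockBandS m n r 1
        (lam • ((((List.range m).filter fun i => i % 2 == 1).map
              (SFM m n r A B C D)).prod⁻¹ * SFM m n r A B C D m) -
          SFM m n r A B C D 0 *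
            (((List.range m).filter fun i => (i % 2 == 0) && (i != 0)).map
              (SFM m n r A B C D)).prod) := by
  intro lam
  set Lo := (List.range m).filter fun i => i % 2 == 1 with hLo
  set Le := (List.range m).filter fun i => (i % 2 == 0) && (i != 0) with hLe
  have hLo_mem : ∀ j ∈ Lo, 1 ≤ j ∧ j < m := by
    intro j hj
    rw [hLo, List.mem_filter, List.mem_range] at hj
    have := hj.2
    simp only [beq_iff_eq] at this
    omega
  have hLe_mem : ∀ j ∈ Le, 1 ≤ j ∧ j < m := by
    intro j hj
    rw [hLe, List.mem_filter, List.mem_range] at hj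
    have := hj.2
    simp only [Bool.and_eq_true, beq_iff_eq, bne_iff_ne, ne_eq] at this
    omega
  have hLo_par : ∀ j ∈ Lo, j % 2 = 1 := by
    intro j hj
    rw [hLo, List.mem_filter] at hj
    simpa using hj.2
  have hLe_par : ∀ j ∈ Le, j % 2 = 0 := by
    intro j hj
    rw [hLe, List.mem_filter] at hj
    have := hj.2
    simp only [Bool.and_eq_true, beq_iff_eq] at this
    exact this.1
  have hLo_lt : Lo.Pairwise (· < ·) :=
    (List.pairwise_lt_range).sublist (List.filter_sublist)
  have hLe_lt : Le.Pairwise (· < ·) :=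
    (List.pairwise_lt_range).sublist (List.filter_sublist)
  have hLo_pw : Lo.Pairwise fun a b => a + 2 ≤ b ∨ b + 2 ≤ a := by
    refine hLo_lt.imp_of_mem ?_
    intro a b ha hb hab
    have pa := hLo_par a ha
    have pb := hLo_par b hb
    omega
  have hLe_pw : Le.Pairwise fun a b => a + 2 ≤ b ∨ b + 2 ≤ a := by
    refine hLe_lt.imp_of_mem ?_
    intro a b ha hb hab
    have pa := hLe_par a ha
    have pb := hLe_par b hb
    omega
  have h0e : (0 : ℕ) ∉ Le := fun h => by have := (hLe_mem 0 h).1; omega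
  have h1e : (1 : ℕ) ∉ Le := fun h => by have := hLe_par 1 h; omega
  have hodd : ((Lo.map (SFM m n r A B C D)).prod)⁻¹ =
      Matrix.fromBlocks (GPI m n A Lo) 0 0 1 := by
    apply Matrix.inv_eq_right_inv
    rw [prod_SFM A B C D Lo hLo_mem, GPM_eq_prod A Lo hLo_mem hLo_pw,
      Matrix.fromBlocks_multiply, GPM_mul_GPI A Lo hLo_mem hLo_pw]
    simp [Matrix.fromBlocks_one]
  have heven : (Le.map (SFM m n r A B C D)).prod =
      Matrix.fromBlocks (GPM m n A Le) 0 0 1 := by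
    rw [prod_SFM A B C D Le hLe_mem, GPM_eq_prod A Le hLe_mem hLe_pw]
  have h0 : SFM m n r A B C D 0 =
      Matrix.fromBlocks (FM m n A 0) (-(eB m n r m B)) (-(eC m n r m C)) (-D) := by
    unfold SFM
    rw [if_pos rfl]
  have hM : SFM m n r A B C D m = Matrix.fromBlocks (FM m n A m) 0 0 0 := by
    unfold SFM
    rw [if_neg (by omega), if_pos rfl]
  rw [hodd, hM, h0, heven, Matrix.fromBlocks_multiply, Matrix.fromBlocks_multiply]
  simp only [Matrix.mul_zero, Matrix.zero_mul, Matrix.mul_one, Matrix.one_mul, mul_zero,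
    zero_mul, add_zero, zero_add, mul_one, one_mul]
  intro x y hxy
  rcases x with p | s <;> rcases y with q | t
  · -- top-left block: band
    have hpq : (p.1 : ℕ) + 1 < (q.1 : ℕ) ∨ (q.1 : ℕ) + 1 < (p.1 : ℕ) := by
      simpa [sIdx] using hxy
    rw [Matrix.sub_apply, Matrix.smul_apply, Matrix.fromBlocks_apply₁₁,
      Matrix.fromBlocks_apply₁₁]
    have h1 : (GPI m n A Lo * FM m n A m) p q = 0 := by
      rw [FM_eq_blk]
      unfold GPI
      rw [of_mul_of]
      show (∑ j, GPib m n A Lo p.1 j * FMb m n A m j q.1) p.2 q.2 = 0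
      rw [Finset.sum_eq_zero, Matrix.zero_apply]
      intro j _
      by_cases hj : j = q.1
      · rw [GPib_band A Lo p.1 j (by rw [hj]; exact hpq), Matrix.zero_mul]
      · rw [FMb_m_offdiag A hm j q.1 hj, Matrix.mul_zero]
    have h2 : (FM m n A 0 * GPM m n A Le) p q = 0 := by
      rw [FM_eq_blk]
      unfold GPM
      rw [of_mul_of]
      show (∑ j, FMb m n A 0 p.1 j * GPb m n A Le j q.1) p.2 q.2 = 0
      rw [Finset.sum_eq_zero, Matrix.zero_apply]
      intro j _
      by_cases hj : p.1 = j
      · rw [GPb_band A Le j q.1 (by rw [← hj]; exact hpq), Matrix.mul_zero]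
      · rw [FMb_zero_offdiag A p.1 j hj, Matrix.zero_mul]
    rw [h1, h2, smul_zero, sub_zero]
  · -- top-right block
    have hp : (p.1 : ℕ) + 1 < m := by
      have := p.1.isLt
      simp only [sIdx] at hxy
      omega
    rw [Matrix.sub_apply, Matrix.smul_apply, Matrix.fromBlocks_apply₁₂,
      Matrix.fromBlocks_apply₁₂, Matrix.zero_apply, smul_zero, Matrix.neg_apply]
    show (0 : ℂ) - -(if (p.1 : ℕ) + 1 = m then B p.2 t else 0) = 0
    rw [if_neg (by omega)]
    simp
  · -- bottom-left block
    have hq : (q.1 : ℕ) + 1 < m := by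
      have := q.1.isLt
      simp only [sIdx] at hxy
      omega
    rw [Matrix.sub_apply, Matrix.smul_apply, Matrix.fromBlocks_apply₂₁,
      Matrix.fromBlocks_apply₂₁, Matrix.zero_apply, smul_zero]
    have h3 : (-(eC m n r m C) * GPM m n A Le) s q = 0 := by
      rw [Matrix.mul_apply]
      apply Finset.sum_eq_zero
      intro u _
      by_cases hu : (u.1 : ℕ) + 1 = m
      · have hGP : GPM m n A Le u q = 0 := by
          show GPb m n A Le u.1 q.1 u.2 q.2 = 0
          rw [GPb_row_id A Le u.1 q.1
            (by
              have e : m - 1 - (u.1 : ℕ) = 0 := by omega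
              rw [e]; exact h0e)
            (by
              have e : m - (u.1 : ℕ) = 1 := by omega
              rw [e]; exact h1e)]
          rw [if_neg (show u.1 ≠ q.1 from fun h => by
            have : (u.1 : ℕ) = (q.1 : ℕ) := congrArg Fin.val h
            omega)]
          rfl
        rw [hGP, mul_zero]
      · have : (-(eC m n r m C)) s u = 0 := by
          rw [Matrix.neg_apply]
          show -(if (u.1 : ℕ) + 1 = m then C s u.2 else 0) = 0
          rw [if_neg hu, neg_zero]
        rw [this, zero_mul]
    rw [h3, sub_zero]
  · -- bottom-right block
    exfalso
    simp only [sIdx] at hxy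
    omega

end
end

section
/- Let λ ∈ ℂ be such that P(λ) is invertible. Then the linear map g : ℂ^r → ℂ^{n+r}, g(y) = ((C P(λ)^{-1})^T y, y), restricts to a linear isomorphism from the left null space N_l(G(λ)) = { y ∈ ℂ^r : y^T G(λ) = 0 } onto N_l(S(λ)) = { z ∈ ℂ^{n+r} : z^T S(λ) = 0 }. -/
open Matrix

noncomputable section

/-- for `λ` with `P(λ)` invertible, `y ↦ ((C P(λ)⁻¹)ᵀ y, y)` restricts to a linear
isomorphism from the left null space of `G(λ)` onto the left null space of `S(λ)`. -/
theorem stmt12 (m n r : ℕ) (hm : 2 ≤ m) (hn : 1 ≤ n) (hr : 1 ≤ r)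
    (A : Fin (m + 1) → Matrix (Fin n) (Fin n) ℂ) (hreg : Regular m n A)
    (B : Matrix (Fin n) (Fin r) ℂ) (C : Matrix (Fin r) (Fin n) ℂ)
    (D : Matrix (Fin r) (Fin r) ℂ)
    (lam : ℂ) (hP : IsUnit (PEval m n A lam).det) :
    ∃ φ : LinearMap.ker (Matrix.mulVecLin (C * (PEval m n A lam)⁻¹ * B + D)ᵀ) ≃ₗ[ℂ]
        LinearMap.ker (Matrix.mulVecLin (SMat m n r A B C D lam)ᵀ),
      ∀ y, (φ y : Fin n ⊕ Fin r → ℂ) =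

        Sum.elim ((C * (PEval m n A lam)⁻¹)ᵀ.mulVec (y : Fin r → ℂ)) (y : Fin r → ℂ) := by
  classical
  set P := PEval m n A lam with hPdef
  have hinv : P⁻¹ * P = 1 := Matrix.nonsing_inv_mul P hP
  have hPT : IsUnit Pᵀ.det := by rwa [Matrix.det_transpose]
  have hinvT : Pᵀ⁻¹ * Pᵀ = 1 := Matrix.nonsing_inv_mul Pᵀ hPT
  set T : Matrix (Fin n ⊕ Fin r) (Fin r) ℂ := Matrix.fromRows (C * P⁻¹)ᵀ 1 with hTdef
  have hTapp : ∀ y : Fin r → ℂ, T *ᵥ y = Sum.elim ((C * P⁻¹)ᵀ *ᵥ y) y := by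
    intro y
    rw [hTdef, Matrix.fromRows_mulVec, Matrix.one_mulVec]
  have key1 : Pᵀ * (C * P⁻¹)ᵀ = Cᵀ := by
    rw [← Matrix.transpose_mul, Matrix.mul_assoc, hinv, Matrix.mul_one]
  have key2 : Bᵀ * (C * P⁻¹)ᵀ = (C * P⁻¹ * B)ᵀ := (Matrix.transpose_mul (C * P⁻¹) B).symm
  have key3 : (C * P⁻¹)ᵀ = Pᵀ⁻¹ * Cᵀ := by
    rw [Matrix.transpose_mul, Matrix.transpose_nonsing_inv]
  have hSmul : ∀ z : Fin n ⊕ Fin r → ℂ,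
      (SMat m n r A B C D lam)ᵀ *ᵥ z =
      Sum.elim (-(Pᵀ *ᵥ z ∘ Sum.inl) + Cᵀ *ᵥ z ∘ Sum.inr)
        (Bᵀ *ᵥ z ∘ Sum.inl + Dᵀ *ᵥ z ∘ Sum.inr) := by
    intro z
    rw [SMat, Matrix.fromBlocks_transpose, Matrix.fromBlocks_mulVec, Matrix.transpose_neg,
      Matrix.neg_mulVec]
  -- forward membership
  have hfwd : ∀ y : Fin r → ℂ, (C * P⁻¹ * B + D)ᵀ *ᵥ y = 0 →
      (SMat m n r A B C D lam)ᵀ *ᵥ (T *ᵥ y) = 0 := by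
    intro y hy
    rw [hTapp, hSmul]
    funext x
    rcases x with i | j
    · simp only [Sum.elim_inl, Sum.elim_comp_inl, Sum.elim_comp_inr, Matrix.mulVec_mulVec, key1,
        Pi.add_apply, Pi.neg_apply, Pi.zero_apply]
      ring
    · simp only [Sum.elim_inr, Sum.elim_comp_inl, Sum.elim_comp_inr, Matrix.mulVec_mulVec, key2]
      have : ((C * P⁻¹ * B)ᵀ *ᵥ y + Dᵀ *ᵥ y) = (C * P⁻¹ * B + D)ᵀ *ᵥ y := by
        rw [Matrix.transpose_add, Matrix.add_mulVec]
      rw [this, hy]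
      rfl
  -- backward facts
  have hbwd : ∀ z : Fin n ⊕ Fin r → ℂ, (SMat m n r A B C D lam)ᵀ *ᵥ z = 0 →
      (z ∘ Sum.inl = (C * P⁻¹)ᵀ *ᵥ (z ∘ Sum.inr)) ∧
      (C * P⁻¹ * B + D)ᵀ *ᵥ (z ∘ Sum.inr) = 0 := by
    intro z hz
    rw [hSmul] at hz
    have h1 : -(Pᵀ *ᵥ z ∘ Sum.inl) + Cᵀ *ᵥ z ∘ Sum.inr = 0 := by
      funext i; exact congrFun hz (Sum.inl i)
    have h2 : Bᵀ *ᵥ z ∘ Sum.inl + Dᵀ *ᵥ z ∘ Sum.inr = 0 := by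
      funext j; exact congrFun hz (Sum.inr j)
    rw [neg_add_eq_sub, sub_eq_zero] at h1
    have hu : z ∘ Sum.inl = (C * P⁻¹)ᵀ *ᵥ (z ∘ Sum.inr) := by
      rw [key3, ← Matrix.mulVec_mulVec, h1, Matrix.mulVec_mulVec, hinvT, Matrix.one_mulVec]
    refine ⟨hu, ?_⟩
    rw [Matrix.transpose_add, Matrix.add_mulVec, ← key2, ← Matrix.mulVec_mulVec, ← hu, h2]
  set K1 := LinearMap.ker (Matrix.mulVecLin (C * P⁻¹ * B + D)ᵀ) with hK1
  set K2 := LinearMap.ker (Matrix.mulVecLin (SMat m n r A B C D lam)ᵀ) with hK2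
  have memK1 : ∀ y : Fin r → ℂ, y ∈ K1 ↔ (C * P⁻¹ * B + D)ᵀ *ᵥ y = 0 := by
    intro y; rw [hK1, LinearMap.mem_ker, Matrix.mulVecLin_apply]
  have memK2 : ∀ z : Fin n ⊕ Fin r → ℂ,
      z ∈ K2 ↔ (SMat m n r A B C D lam)ᵀ *ᵥ z = 0 := by
    intro z; rw [hK2, LinearMap.mem_ker, Matrix.mulVecLin_apply]
  let f : K1 →ₗ[ℂ] K2 := LinearMap.codRestrict _ ((Matrix.mulVecLin T) ∘ₗ K1.subtype)
    (fun y => by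
      rw [memK2]
      simpa using hfwd y ((memK1 y).mp y.2))
  let g : K2 →ₗ[ℂ] K1 := LinearMap.codRestrict _
    ((LinearMap.funLeft ℂ ℂ Sum.inr) ∘ₗ K2.subtype)
    (fun z => by
      rw [memK1]
      exact (hbwd z ((memK2 z).mp z.2)).2)
  have hfg : f.comp g = LinearMap.id := by
    apply LinearMap.ext
    intro z
    apply Subtype.ext
    have hz := (hbwd z ((memK2 z).mp z.2)).1
    show T *ᵥ ((z : Fin n ⊕ Fin r → ℂ) ∘ Sum.inr) = (z : Fin n ⊕ Fin r → ℂ)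
    rw [hTapp, ← hz, Sum.elim_comp_inl_inr]
  have hgf : g.comp f = LinearMap.id := by
    apply LinearMap.ext
    intro y
    apply Subtype.ext
    show (T *ᵥ (y : Fin r → ℂ)) ∘ Sum.inr = (y : Fin r → ℂ)
    rw [hTapp]
    rfl
  refine ⟨LinearEquiv.ofLinear f g hfg hgf, ?_⟩
  intro y
  show T *ᵥ (y : Fin r → ℂ) = _
  rw [hTapp]

end
end

section
/- Let λ ∈ ℂ be such that P(λ) is invertible, and let C_2(λ) be the second companion form of S. For x ∈ ℂ^r, set w := P(λ)^{-1} B x ∈ ℂ^n and let v ∈ ℂ^{nm+r} be the block vector v = (w, P_1(λ)w, P_2(λ)w, …, P_{m−1}(λ)w, x), where P_k(λ) is the degree-k Horner shift of P. Then G(λ)x = 0 if and only if C_2(λ)v = 0, and the map x ↦ v is a linear isomorphism from the null space of G(λ) onto the null space of C_2(λ). -/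
open Matrix

noncomputable section

namespace Stmt16Aux

open Fin.NatCast

/-- The block vector `v = (w, P_1(λ)w, …, P_{m−1}(λ)w, x)`. -/
def Vfun (m n r : ℕ) (A : Fin (m + 1) → Matrix (Fin n) (Fin n) ℂ)
    (B : Matrix (Fin n) (Fin r) ℂ) (lam : ℂ) (x : Fin r → ℂ) :
    (Fin m × Fin n) ⊕ Fin r → ℂ :=
  Sum.elim
    (fun p : Fin m × Fin n =>
      if (p.1 : ℕ) = 0 then ((PEval m n A lam)⁻¹ * B).mulVec x p.2
      else (Horner m n A p.1.castSucc lam).mulVec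
        (((PEval m n A lam)⁻¹ * B).mulVec x) p.2)
    x

lemma horner_zero (m n : ℕ) (A : Fin (m + 1) → Matrix (Fin n) (Fin n) ℂ) (lam : ℂ)
    (h0 : 0 < m + 1) :
    Horner m n A ⟨0, h0⟩ lam = A ⟨m, Nat.lt_succ_self m⟩ := by
  simp [Horner]

lemma horner_succ (m n : ℕ) (A : Fin (m + 1) → Matrix (Fin n) (Fin n) ℂ) (lam : ℂ)
    (k : ℕ) (hk : k + 1 ≤ m) :
    Horner m n A ⟨k + 1, by omega⟩ lam =
      A ⟨m - (k + 1), by omega⟩ + lam • Horner m n A ⟨k, by omega⟩ lam := by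
  unfold Horner
  rw [Fin.sum_univ_succ]
  congr 1
  · simp
  · rw [Finset.smul_sum]
    refine Finset.sum_congr rfl fun j _ => ?_
    rw [smul_smul]
    refine congrArg₂ (· • ·) ?_ (congrArg A (Fin.ext ?_))
    · rw [Fin.val_succ, pow_succ']
    · simp only [Fin.val_succ]
      omega

lemma horner_last (m n : ℕ) (A : Fin (m + 1) → Matrix (Fin n) (Fin n) ℂ) (lam : ℂ) :
    Horner m n A ⟨m, Nat.lt_succ_self m⟩ lam = PEval m n A lam := by
  unfold Horner PEval
  refine Finset.sum_congr rfl fun j _ => ?_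
  exact congrArg₂ (· • ·) rfl (congrArg A (Fin.ext (by simp)))

lemma pair_mulVec (m n : ℕ) (M : Matrix (Fin m × Fin n) (Fin m × Fin n) ℂ)
    (u : Fin m × Fin n → ℂ) (p : Fin m × Fin n) :
    M.mulVec u p = ∑ q1 : Fin m, ∑ q2 : Fin n, M p (q1, q2) * u (q1, q2) := by
  simp [Matrix.mulVec, dotProduct, Fintype.sum_prod_type]

lemma FMm_mulVec (m n : ℕ) (hm : 2 ≤ m) (A : Fin (m + 1) → Matrix (Fin n) (Fin n) ℂ)
    (u : Fin m × Fin n → ℂ) (k : Fin m) (j : Fin n) :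
    (FM m n A m).mulVec u (k, j) =
      if (k : ℕ) = 0 then (A (m : Fin (m + 1))).mulVec (fun i => u (k, i)) j
      else u (k, j) := by
  have hm0 : m ≠ 0 := by omega
  have hent : ∀ q1 q2, FM m n A m (k, j) (q1, q2) =
      if k = q1 then
        (if (k : ℕ) = 0 then A (m : Fin (m + 1)) j q2 else if j = q2 then 1 else 0)
      else 0 := by
    intro q1 q2
    simp only [FM, Matrix.of_apply, if_neg hm0, if_pos rfl]
    by_cases h1 : k = q1 <;> by_cases h2 : (k : ℕ) = 0 <;>
      simp [h1, h2, Matrix.one_apply,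
        apply_ite (fun M : Matrix (Fin n) (Fin n) ℂ => M j q2)]
  rw [pair_mulVec]
  have hq : ∀ q1 : Fin m, (∑ q2, FM m n A m (k, j) (q1, q2) * u (q1, q2)) =
      if k = q1 then
        (if (k : ℕ) = 0 then (A (m : Fin (m + 1))).mulVec (fun i => u (q1, i)) j
         else u (q1, j))
      else 0 := by
    intro q1
    by_cases h1 : k = q1
    · subst h1
      by_cases h2 : (k : ℕ) = 0
      · simp [hent, h2, Matrix.mulVec, dotProduct]
      · simp [hent, h2, ite_mul, zero_mul]
    · simp [hent, h1]
  rw [Finset.sum_congr rfl fun q1 _ => hq q1, Finset.sum_ite_eq]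
  simp

lemma N2_mulVec (m n : ℕ) (hm : 2 ≤ m) (A : Fin (m + 1) → Matrix (Fin n) (Fin n) ℂ)
    (u : Fin m × Fin n → ℂ) (k : Fin m) (j : Fin n) :
    (N2 m n A).mulVec u (k, j) =
      -((A (((m - 1 - (k : ℕ)) : ℕ) : Fin (m + 1))).mulVec
          (fun i => u (⟨0, by omega⟩, i)) j)
      + (if h : (k : ℕ) + 1 < m then u (⟨(k : ℕ) + 1, h⟩, j) else 0) := by
  have hent : ∀ q1 q2, N2 m n A (k, j) (q1, q2) =
      if (q1 : ℕ) = 0 then -(A (((m - 1 - (k : ℕ)) : ℕ) : Fin (m + 1)) j q2)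
      else if (q1 : ℕ) = (k : ℕ) + 1 then (if j = q2 then 1 else 0) else 0 := by
    intro q1 q2
    simp only [N2, Matrix.of_apply]
    by_cases h1 : (q1 : ℕ) = 0 <;> by_cases h2 : (q1 : ℕ) = (k : ℕ) + 1 <;>
      simp [h1, h2, Matrix.one_apply]
  rw [pair_mulVec]
  have hq : ∀ q1 : Fin m, (∑ q2, N2 m n A (k, j) (q1, q2) * u (q1, q2)) =
      (if (q1 : ℕ) = 0 then
        -((A (((m - 1 - (k : ℕ)) : ℕ) : Fin (m + 1))).mulVec (fun i => u (q1, i)) j)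
       else 0)
      + (if (q1 : ℕ) = (k : ℕ) + 1 then u (q1, j) else 0) := by
    intro q1
    by_cases h1 : (q1 : ℕ) = 0
    · have h2 : ¬ (q1 : ℕ) = (k : ℕ) + 1 := by omega
      simp [hent, h1, h2, Matrix.mulVec, dotProduct, Finset.sum_neg_distrib, neg_mul]
    · by_cases h2 : (q1 : ℕ) = (k : ℕ) + 1
      · simp [hent, h1, h2, ite_mul, zero_mul]
      · simp [hent, h1, h2]
  rw [Finset.sum_congr rfl fun q1 _ => hq q1, Finset.sum_add_distrib]
  congr 1
  · rw [Fintype.sum_eq_single (⟨0, by omega⟩ : Fin m)]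
    · simp
    · intro b hb
      rw [if_neg]
      simpa [Fin.ext_iff] using hb
  · by_cases h : (k : ℕ) + 1 < m
    · rw [dif_pos h, Fintype.sum_eq_single (⟨(k : ℕ) + 1, h⟩ : Fin m)]
      · simp
      · intro b hb
        rw [if_neg]
        simpa [Fin.ext_iff] using hb
    · rw [dif_neg h]
      refine Finset.sum_eq_zero fun q1 _ => ?_
      rw [if_neg]
      have := q1.isLt
      omega

lemma eB_mulVec (m n r j' : ℕ) (B : Matrix (Fin n) (Fin r) ℂ) (x : Fin r → ℂ)
    (k : Fin m) (j : Fin n) :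
    (eB m n r j' B).mulVec x (k, j) = if (k : ℕ) + 1 = j' then B.mulVec x j else 0 := by
  by_cases h : (k : ℕ) + 1 = j' <;>
    simp [eB, Matrix.mulVec, dotProduct, h]

lemma eC_one_mulVec (m n r : ℕ) (hm : 2 ≤ m) (C : Matrix (Fin r) (Fin n) ℂ)
    (u : Fin m × Fin n → ℂ) (q : Fin r) :
    (eC m n r 1 C).mulVec u q = C.mulVec (fun i => u (⟨0, by omega⟩, i)) q := by
  have : ∀ p1 : Fin m, (∑ p2, eC m n r 1 C q (p1, p2) * u (p1, p2)) =
      if (p1 : ℕ) = 0 then C.mulVec (fun i => u (p1, i)) q else 0 := by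
    intro p1
    by_cases h : (p1 : ℕ) = 0 <;>
      simp [eC, Matrix.mulVec, dotProduct, h]
  rw [show (eC m n r 1 C).mulVec u q
      = ∑ p1 : Fin m, ∑ p2 : Fin n, eC m n r 1 C q (p1, p2) * u (p1, p2) by
    simp [Matrix.mulVec, dotProduct, Fintype.sum_prod_type]]
  rw [Finset.sum_congr rfl fun p1 _ => this p1,
    Fintype.sum_eq_single (⟨0, by omega⟩ : Fin m)]
  · simp
  · intro b hb
    rw [if_neg]
    simpa [Fin.ext_iff] using hb

lemma natCast_fin (m a : ℕ) (h : a < m + 1) : ((a : ℕ) : Fin (m + 1)) = ⟨a, h⟩ :=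
  Fin.ext (Fin.val_cast_of_lt h)

lemma horner_top (m n : ℕ) (A : Fin (m + 1) → Matrix (Fin n) (Fin n) ℂ) (lam : ℂ)
    (hm : 1 ≤ m) :
    PEval m n A lam = A ⟨0, by omega⟩ + lam • Horner m n A ⟨m - 1, by omega⟩ lam := by
  have h2 : (⟨m, Nat.lt_succ_self m⟩ : Fin (m + 1)) = ⟨m - 1 + 1, by omega⟩ :=
    Fin.ext (by show m = m - 1 + 1; omega)
  rw [← horner_last, h2, horner_succ m n A lam (m - 1) (by omega)]
  refine congrArg₂ (· + ·)
    (congrArg A (Fin.ext (by show m - (m - 1 + 1) = 0; omega))) rfl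

lemma C2P_mulVec_inl (m n r : ℕ) (hm : 2 ≤ m) (A : Fin (m + 1) → Matrix (Fin n) (Fin n) ℂ)
    (B : Matrix (Fin n) (Fin r) ℂ) (C : Matrix (Fin r) (Fin n) ℂ) (D : Matrix (Fin r) (Fin r) ℂ)
    (lam : ℂ) (y : Fin m × Fin n → ℂ) (x : Fin r → ℂ) (k : Fin m) (j : Fin n) :
    (C2P m n r A B C D lam).mulVec (Sum.elim y x) (Sum.inl (k, j)) =
      -(lam * (if (k : ℕ) = 0 then (A (m : Fin (m + 1))).mulVec (fun i => y (k, i)) j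
               else y (k, j)))
      + (-((A (((m - 1 - (k : ℕ)) : ℕ) : Fin (m + 1))).mulVec
            (fun i => y (⟨0, by omega⟩, i)) j)
         + (if h : (k : ℕ) + 1 < m then y (⟨(k : ℕ) + 1, h⟩, j) else 0))
      + (if (k : ℕ) + 1 = m then B.mulVec x j else 0) := by
  rw [C2P, Matrix.fromBlocks_mulVec]
  simp only [Sum.elim_inl, Pi.add_apply, Sum.elim_comp_inl, Sum.elim_comp_inr]
  rw [Matrix.neg_mulVec, Matrix.sub_mulVec, Matrix.smul_mulVec]
  simp only [Pi.neg_apply, Pi.sub_apply, Pi.smul_apply, smul_eq_mul]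
  rw [FMm_mulVec m n hm, N2_mulVec m n hm, eB_mulVec]
  ring

lemma C2P_mulVec_inr (m n r : ℕ) (hm : 2 ≤ m) (A : Fin (m + 1) → Matrix (Fin n) (Fin n) ℂ)
    (B : Matrix (Fin n) (Fin r) ℂ) (C : Matrix (Fin r) (Fin n) ℂ) (D : Matrix (Fin r) (Fin r) ℂ)
    (lam : ℂ) (y : Fin m × Fin n → ℂ) (x : Fin r → ℂ) (q : Fin r) :
    (C2P m n r A B C D lam).mulVec (Sum.elim y x) (Sum.inr q) =
      C.mulVec (fun i => y (⟨0, by omega⟩, i)) q + D.mulVec x q := by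
  rw [C2P, Matrix.fromBlocks_mulVec]
  simp only [Sum.elim_inr, Pi.add_apply, Sum.elim_comp_inl, Sum.elim_comp_inr]
  rw [eC_one_mulVec m n r hm]

set_option maxHeartbeats 1000000 in
lemma main_comp (m n r : ℕ) (hm : 2 ≤ m) (A : Fin (m + 1) → Matrix (Fin n) (Fin n) ℂ)
    (B : Matrix (Fin n) (Fin r) ℂ) (C : Matrix (Fin r) (Fin n) ℂ) (D : Matrix (Fin r) (Fin r) ℂ)
    (lam : ℂ) (hP : IsUnit (PEval m n A lam).det) (x : Fin r → ℂ) :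
    (C2P m n r A B C D lam).mulVec (Vfun m n r A B lam x) =
      Sum.elim (0 : Fin m × Fin n → ℂ) ((C * (PEval m n A lam)⁻¹ * B + D).mulVec x) := by
  have hvmk : ∀ (a : ℕ) (h : a < m), ((⟨a, h⟩ : Fin m) : ℕ) = a := fun _ _ => rfl
  have hcs : ∀ a : Fin m,
      a.castSucc = (⟨(a : ℕ), Nat.lt_succ_of_lt a.isLt⟩ : Fin (m + 1)) := fun _ => rfl
  have hPw : (PEval m n A lam).mulVec (((PEval m n A lam)⁻¹ * B).mulVec x)
      = B.mulVec x := by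
    rw [Matrix.mulVec_mulVec, Matrix.mul_nonsing_inv_cancel_left _ _ hP]
  funext z
  cases z with
  | inl p =>
    obtain ⟨k, j⟩ := p
    rw [Vfun, C2P_mulVec_inl m n r hm]
    simp only [Sum.elim_inl, Pi.zero_apply, hvmk, hcs]
    by_cases hk0 : (k : ℕ) = 0
    · have hlt : (1 : ℕ) < m := by omega
      have hne : ¬((1 : ℕ) = m) := by omega
      have h1 : Horner m n A ⟨1, by omega⟩ lam
          = A ⟨m - 1, by omega⟩ + lam • Horner m n A ⟨0, by omega⟩ lam := by
        have h := horner_succ m n A lam 0 (by omega)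
        rw [h]
      have h0 : Horner m n A (0 : Fin (m + 1)) lam = A ⟨m, Nat.lt_succ_self m⟩ :=
        horner_zero m n A lam (by omega)
      have hA1 : ((m - 1 : ℕ) : Fin (m + 1)) = ⟨m - 1, by omega⟩ :=
        natCast_fin m (m - 1) (by omega)
      have hAm : ((m : ℕ) : Fin (m + 1)) = ⟨m, Nat.lt_succ_self m⟩ :=
        natCast_fin m m (by omega)
      simp [hk0, hvmk, hcs, hlt, hne, h1, h0, hA1, hAm,
        Matrix.add_mulVec, Matrix.smul_mulVec, Matrix.add_mul, Matrix.smul_mul]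
    · by_cases hlt : (k : ℕ) + 1 < m
      · have hne : ¬((k : ℕ) + 1 = m) := by omega
        have hne2 : ¬((k : ℕ) + 1 = 0) := by omega
        have h1 : Horner m n A ⟨(k : ℕ) + 1, by omega⟩ lam
            = A ⟨m - 1 - (k : ℕ), by omega⟩
              + lam • Horner m n A ⟨(k : ℕ), by omega⟩ lam := by
          have h := horner_succ m n A lam (k : ℕ) (by omega)
          rw [h]
          exact congrArg₂ (· + ·)
            (congrArg A (Fin.ext (by show m - ((k:ℕ)+1) = m - 1 - (k:ℕ); omega))) rfl
        have hA1 : ((m - 1 - (k : ℕ) : ℕ) : Fin (m + 1)) = ⟨m - 1 - (k : ℕ), by omega⟩ :=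
          natCast_fin m (m - 1 - (k : ℕ)) (by omega)
        simp [hk0, hvmk, hcs, hlt, hne, hne2, h1, hA1,
          Matrix.add_mulVec, Matrix.smul_mulVec, Matrix.add_mul, Matrix.smul_mul]
      · have hkm : ¬((k : ℕ) + 1 < m) := hlt
        have heq : (k : ℕ) + 1 = m := by have := k.isLt; omega
        have hsub : m - 1 - (k : ℕ) = 0 := by omega
        have hA0 : ((m - 1 - (k : ℕ) : ℕ) : Fin (m + 1)) = ⟨0, by omega⟩ := by
          rw [hsub]; exact natCast_fin m 0 (by omega)
        have hkk : (⟨(k : ℕ), Nat.lt_succ_of_lt k.isLt⟩ : Fin (m + 1))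
            = ⟨m - 1, by omega⟩ := Fin.ext (by show (k : ℕ) = m - 1; omega)
        have htop : PEval m n A lam
            = A ⟨0, by omega⟩ + lam • Horner m n A ⟨m - 1, by omega⟩ lam :=
          horner_top m n A lam (by omega)
        have hBx : (A ⟨0, by omega⟩).mulVec (((PEval m n A lam)⁻¹ * B).mulVec x)
            + lam • (Horner m n A ⟨m - 1, by omega⟩ lam).mulVec
                (((PEval m n A lam)⁻¹ * B).mulVec x) = B.mulVec x := by
          have h2 := congrArg
            (fun M : Matrix (Fin n) (Fin n) ℂ =>
              M.mulVec (((PEval m n A lam)⁻¹ * B).mulVec x)) htop.symm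
          simp only [Matrix.add_mulVec, Matrix.smul_mulVec] at h2
          rw [h2, hPw]
        have hBxj := congrFun hBx j
        simp only [Pi.add_apply, Pi.smul_apply, smul_eq_mul] at hBxj
        simp [hk0, hvmk, hcs, hkm, heq, hA0, hkk] at hBxj ⊢
        linear_combination -hBxj
  | inr q =>
    rw [Vfun, C2P_mulVec_inr m n r hm]
    simp [hvmk, Matrix.add_mulVec, Matrix.mul_assoc, Matrix.mulVec_mulVec]

set_option maxHeartbeats 1000000 in
lemma back_comp (m n r : ℕ) (hm : 2 ≤ m) (A : Fin (m + 1) → Matrix (Fin n) (Fin n) ℂ)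
    (B : Matrix (Fin n) (Fin r) ℂ) (C : Matrix (Fin r) (Fin n) ℂ) (D : Matrix (Fin r) (Fin r) ℂ)
    (lam : ℂ) (hP : IsUnit (PEval m n A lam).det)
    (u : (Fin m × Fin n) ⊕ Fin r → ℂ) (hu : (C2P m n r A B C D lam).mulVec u = 0) :
    (C * (PEval m n A lam)⁻¹ * B + D).mulVec (fun q => u (Sum.inr q)) = 0 ∧
      u = Vfun m n r A B lam (fun q => u (Sum.inr q)) := by
  have hvmk : ∀ (a : ℕ) (h : a < m), ((⟨a, h⟩ : Fin m) : ℕ) = a := fun _ _ => rfl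
  have hcs : ∀ a : Fin m,
      a.castSucc = (⟨(a : ℕ), Nat.lt_succ_of_lt a.isLt⟩ : Fin (m + 1)) := fun _ => rfl
  set y : Fin m × Fin n → ℂ := fun p => u (Sum.inl p) with hy
  set x : Fin r → ℂ := fun q => u (Sum.inr q) with hx
  have hu' : u = Sum.elim y x := by funext z; cases z <;> rfl
  rw [hu'] at hu
  have E : ∀ (k : Fin m) (j : Fin n),
      -(lam * (if (k : ℕ) = 0 then (A (m : Fin (m + 1))).mulVec (fun i => y (k, i)) j
               else y (k, j)))
      + (-((A (((m - 1 - (k : ℕ)) : ℕ) : Fin (m + 1))).mulVec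
            (fun i => y (⟨0, by omega⟩, i)) j)
         + (if h : (k : ℕ) + 1 < m then y (⟨(k : ℕ) + 1, h⟩, j) else 0))
      + (if (k : ℕ) + 1 = m then B.mulVec x j else 0) = 0 := by
    intro k j
    have h2 := congrFun hu (Sum.inl (k, j))
    rw [C2P_mulVec_inl m n r hm] at h2
    simpa using h2
  have Er : ∀ q : Fin r,
      C.mulVec (fun i => y (⟨0, by omega⟩, i)) q + D.mulVec x q = 0 := by
    intro q
    have h2 := congrFun hu (Sum.inr q)
    rw [C2P_mulVec_inr m n r hm] at h2
    simpa using h2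
  have hind : ∀ (k : ℕ) (hk : k < m), 1 ≤ k →
      (fun j => y (⟨k, hk⟩, j))
        = (Horner m n A ⟨k, by omega⟩ lam).mulVec (fun i => y (⟨0, by omega⟩, i)) := by
    intro k
    induction k with
    | zero => intro _ h; omega
    | succ t ih =>
      intro hk _
      funext j
      have e := E ⟨t, by omega⟩ j
      simp only [hvmk] at e
      have h1 : t + 1 < m := hk
      have h2 : ¬(t + 1 = m) := by omega
      by_cases ht0 : t = 0
      · subst ht0
        have hh1 : Horner m n A ⟨1, by omega⟩ lam
            = A ⟨m - 1, by omega⟩ + lam • Horner m n A (0 : Fin (m + 1)) lam :=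
          (horner_succ m n A lam 0 (by omega)).trans
            (congrArg₂ (· + ·)
              (congrArg A (Fin.ext (by show m - (0 + 1) = m - 1; omega))) rfl)
        have h0 : Horner m n A (0 : Fin (m + 1)) lam = A ⟨m, Nat.lt_succ_self m⟩ :=
          horner_zero m n A lam (by omega)
        have hA1 : ((m - 1 : ℕ) : Fin (m + 1)) = ⟨m - 1, by omega⟩ :=
          natCast_fin m (m - 1) (by omega)
        have hAm : ((m : ℕ) : Fin (m + 1)) = ⟨m, Nat.lt_succ_self m⟩ :=
          natCast_fin m m (by omega)
        have h1' : (1 : ℕ) < m := by omega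
        have h2' : ¬((1 : ℕ) = m) := by omega
        simp [hA1, hAm, h1, h2, h1', h2'] at e ⊢
        rw [hh1, Matrix.add_mulVec, Matrix.smul_mulVec]
        simp only [Pi.add_apply, Pi.smul_apply, smul_eq_mul, h0]
        linear_combination e
      · have ht1 : 1 ≤ t := by omega
        have iht := ih (by omega) ht1
        have hA1 : ((m - 1 - t : ℕ) : Fin (m + 1)) = ⟨m - 1 - t, by omega⟩ :=
          natCast_fin m (m - 1 - t) (by omega)
        have hh1 : Horner m n A ⟨t + 1, by omega⟩ lam
            = A ⟨m - 1 - t, by omega⟩ + lam • Horner m n A ⟨t, by omega⟩ lam := by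
          have h := horner_succ m n A lam t (by omega)
          rw [h]
          exact congrArg₂ (· + ·)
            (congrArg A (Fin.ext (by show m - (t + 1) = m - 1 - t; omega))) rfl
        simp only [hA1, dif_pos h1, if_neg h2, if_neg ht0] at e
        rw [congrFun iht j] at e
        rw [hh1, Matrix.add_mulVec, Matrix.smul_mulVec]
        simp only [Pi.add_apply, Pi.smul_apply, smul_eq_mul]
        linear_combination e
  have hPy : (PEval m n A lam).mulVec (fun i => y (⟨0, by omega⟩, i)) = B.mulVec x := by
    funext j
    have e := E ⟨m - 1, by omega⟩ j
    simp only [hvmk] at e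
    have c1 : ¬(m - 1 = 0) := by omega
    have c2 : ¬(m - 1 + 1 < m) := by omega
    have c3 : m - 1 + 1 = m := by omega
    have hA0 : ((m - 1 - (m - 1) : ℕ) : Fin (m + 1)) = ⟨0, by omega⟩ := by
      rw [show m - 1 - (m - 1) = 0 from by omega]; exact natCast_fin m 0 (by omega)
    simp only [hA0, dif_neg c2, if_pos c3, if_neg c1] at e
    rw [congrFun (hind (m - 1) (by omega) (by omega)) j] at e
    have htop : PEval m n A lam
        = A ⟨0, by omega⟩ + lam • Horner m n A ⟨m - 1, by omega⟩ lam :=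
      horner_top m n A lam (by omega)
    rw [htop, Matrix.add_mulVec, Matrix.smul_mulVec]
    simp only [Pi.add_apply, Pi.smul_apply, smul_eq_mul]
    linear_combination -e
  have hy0 : (fun i => y (⟨0, by omega⟩, i)) = ((PEval m n A lam)⁻¹ * B).mulVec x := by
    have h4 : (fun i => y (⟨0, by omega⟩, i))
        = (PEval m n A lam)⁻¹.mulVec
            ((PEval m n A lam).mulVec (fun i => y (⟨0, by omega⟩, i))) := by
      rw [Matrix.mulVec_mulVec, Matrix.nonsing_inv_mul _ hP, Matrix.one_mulVec]
    rw [h4, hPy, Matrix.mulVec_mulVec]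
  constructor
  · funext q
    have e := Er q
    have h5 : (C * (PEval m n A lam)⁻¹ * B + D).mulVec x q
        = C.mulVec (((PEval m n A lam)⁻¹ * B).mulVec x) q + D.mulVec x q := by
      simp [Matrix.add_mulVec, Matrix.mul_assoc, Matrix.mulVec_mulVec]
    rw [h5, ← hy0]
    exact e
  · rw [hu']
    funext z
    cases z with
    | inl p =>
      obtain ⟨⟨k, hk⟩, j⟩ := p
      rw [Vfun]
      simp only [Sum.elim_inl, hvmk, hcs]
      by_cases hk0 : k = 0
      · subst hk0
        rw [if_pos rfl, ← hy0]
      · rw [if_neg hk0, congrFun (hind k hk (by omega)) j, hy0]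
    | inr q => rfl

def Tlin (m n r : ℕ) (A : Fin (m + 1) → Matrix (Fin n) (Fin n) ℂ)
    (B : Matrix (Fin n) (Fin r) ℂ) (lam : ℂ) :
    (Fin r → ℂ) →ₗ[ℂ] ((Fin m × Fin n) ⊕ Fin r → ℂ) where
  toFun := Vfun m n r A B lam
  map_add' a b := by
    funext z
    cases z with
    | inl p =>
      simp only [Vfun, Sum.elim_inl, Pi.add_apply, Matrix.mulVec_add]
      split_ifs <;> simp [Matrix.mulVec_add]
    | inr q => simp [Vfun]
  map_smul' c a := by
    funext z
    cases z with
    | inl p =>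
      simp only [Vfun, Sum.elim_inl, Pi.smul_apply, RingHom.id_apply, Matrix.mulVec_smul]
      split_ifs <;> simp [Matrix.mulVec_smul]
    | inr q => simp [Vfun]

end Stmt16Aux

/-- with `w := P(λ)⁻¹ B x` and `v := (w, P_1(λ)w, …, P_{m−1}(λ)w, x)` (Horner
shifts), we have `G(λ)x = 0 ↔ C_2(λ)v = 0`, and `x ↦ v` is a linear isomorphism from the
null space of `G(λ)` onto the null space of the second companion form `C_2(λ)`. -/
theorem stmt16 (m n r : ℕ) (hm : 2 ≤ m) (hn : 1 ≤ n) (hr : 1 ≤ r)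
    (A : Fin (m + 1) → Matrix (Fin n) (Fin n) ℂ) (hreg : Regular m n A)
    (B : Matrix (Fin n) (Fin r) ℂ) (C : Matrix (Fin r) (Fin n) ℂ)
    (D : Matrix (Fin r) (Fin r) ℂ)
    (lam : ℂ) (hP : IsUnit (PEval m n A lam).det) :
    (∀ x : Fin r → ℂ,
      (C * (PEval m n A lam)⁻¹ * B + D).mulVec x = 0 ↔
        (C2P m n r A B C D lam).mulVec
          (Sum.elim
            (fun p : Fin m × Fin n =>
              if (p.1 : ℕ) = 0 then ((PEval m n A lam)⁻¹ * B).mulVec x p.2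
              else (Horner m n A p.1.castSucc lam).mulVec
                (((PEval m n A lam)⁻¹ * B).mulVec x) p.2)
            x) = 0) ∧
    ∃ φ : LinearMap.ker (Matrix.mulVecLin (C * (PEval m n A lam)⁻¹ * B + D)) ≃ₗ[ℂ]
        LinearMap.ker (Matrix.mulVecLin (C2P m n r A B C D lam)),
      ∀ x, (φ x : (Fin m × Fin n) ⊕ Fin r → ℂ) =
        Sum.elim
          (fun p : Fin m × Fin n =>
            if (p.1 : ℕ) = 0 then
              ((PEval m n A lam)⁻¹ * B).mulVec (x : Fin r → ℂ) p.2
            else (Horner m n A p.1.castSucc lam).mulVec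
              (((PEval m n A lam)⁻¹ * B).mulVec (x : Fin r → ℂ)) p.2)
          (x : Fin r → ℂ) := by
  classical
  open Stmt16Aux in
  have hiff : ∀ x : Fin r → ℂ,
      (C * (PEval m n A lam)⁻¹ * B + D).mulVec x = 0 ↔
        (C2P m n r A B C D lam).mulVec (Vfun m n r A B lam x) = 0 := by
    intro x
    constructor
    · intro h
      rw [main_comp m n r hm A B C D lam hP, h]
      funext z; cases z <;> rfl
    · intro h
      exact (back_comp m n r hm A B C D lam hP _ h).1
  have hmem : ∀ v : LinearMap.ker (Matrix.mulVecLin (C * (PEval m n A lam)⁻¹ * B + D)),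
      (Stmt16Aux.Tlin m n r A B lam).comp
        (Submodule.subtype _) v ∈ LinearMap.ker (Matrix.mulVecLin (C2P m n r A B C D lam)) := by
    intro v
    have hv := LinearMap.mem_ker.mp v.2
    rw [Matrix.mulVecLin_apply] at hv
    refine LinearMap.mem_ker.mpr ?_
    rw [Matrix.mulVecLin_apply]
    exact (hiff (v : Fin r → ℂ)).mp hv
  let ψ := LinearMap.codRestrict _ ((Stmt16Aux.Tlin m n r A B lam).comp (Submodule.subtype _)) hmem
  have hbij : Function.Bijective ψ := by
    constructor
    · intro a b hab
      refine Subtype.ext (funext fun q => ?_)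
      exact congrFun (congrArg Subtype.val hab) (Sum.inr q)
    · rintro ⟨w, hw⟩
      have hw' : (C2P m n r A B C D lam).mulVec w = 0 := by
        have := LinearMap.mem_ker.mp hw
        rwa [Matrix.mulVecLin_apply] at this
      obtain ⟨h1, h2⟩ := Stmt16Aux.back_comp m n r hm A B C D lam hP w hw'
      refine ⟨⟨fun q => w (Sum.inr q), LinearMap.mem_ker.mpr ?_⟩, ?_⟩
      · rw [Matrix.mulVecLin_apply]
        exact h1
      · exact Subtype.ext h2.symm
  refine ⟨fun x => hiff x, LinearEquiv.ofBijective ψ hbij, fun x => rfl⟩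

end
end
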